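/- Let K be a commutative associative unital ring, let a, b ∈ K, let Q = ℍ[K,a,b] be the generalized quaternion algebra with basis 1, i, j, k, i² = a, j² = b, ij = −ji = k, and let N = {x ∈ K : 2x = 0}. Set B = {x₀ + x₁i + x₂j + x₃k : x₀ ∈ K, x₁,x₂,x₃ ∈ N} and I = {x₀ + x₁i + x₂j + x₃k : x₀,x₁,x₂,x₃ ∈ N}. Then the following are equivalent: (1) for every nonzero q ∈ B there exists p ∈ B with pq ≠ 0 and pq ∈ I; (2) N is an essential ideal of K, i.e., for every nonzero x ∈ K there exists y ∈ K with yx ≠ 0 and yx ∈ N. -/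

import Mathlib

set_option linter.unusedSectionVars false

/-- The associator `(a,b,c) = (ab)c - a(bc)` in a not necessarily associative ring. -/
def naAssociator {R : Type*} [NonAssocRing R] (a b c : R) : R := a * b * c - a * (b * c)

/-- The commutator `[a,b] = ab - ba` in a not necessarily associative ring. -/
def naCommutator {R : Type*} [NonAssocRing R] (a b : R) : R := a * b - b * a

/-- The associative center `N(R)`. -/
def assocCenter (R : Type*) [NonAssocRing R] : Set R :=
  {x | ∀ a b : R, naAssociator x a b = 0 ∧ naAssociator a x b = 0 ∧ naAssociator a b x = 0}

/-- The commutative center `K(R)`. -/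
def commCenter (R : Type*) [NonAssocRing R] : Set R :=
  {x | ∀ a : R, naCommutator x a = 0}

/-- The center `Z(R) = N(R) ∩ K(R)`. -/
def ringCenter (R : Type*) [NonAssocRing R] : Set R :=
  assocCenter R ∩ commCenter R

/-- A ring is centrally essential if for every nonzero `r` there is a central `z`
with `z * r ≠ 0` central. -/
def IsCentrallyEssential (R : Type*) [NonAssocRing R] : Prop :=
  ∀ r : R, r ≠ 0 → ∃ z ∈ ringCenter R, z * r ≠ 0 ∧ z * r ∈ ringCenter R

/-- A ring is left `N`-essential. -/
def IsLeftNEssential (R : Type*) [NonAssocRing R] : Prop :=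
  ∀ r : R, r ≠ 0 → ∃ n ∈ assocCenter R, n * r ≠ 0 ∧ n * r ∈ assocCenter R

/-- A ring is right `N`-essential. -/
def IsRightNEssential (R : Type*) [NonAssocRing R] : Prop :=
  ∀ r : R, r ≠ 0 → ∃ n ∈ assocCenter R, r * n ≠ 0 ∧ r * n ∈ assocCenter R

/-- `I` is an essential ideal of `B` (elementwise formulation). -/
def EssentialIn {R : Type*} [NonAssocRing R] (I B : Set R) : Prop :=
  ∀ b ∈ B, b ≠ 0 → ∃ d ∈ B, d * b ≠ 0 ∧ d * b ∈ I

/-- The Cayley–Dickson ring `(A, α)`: the abelian group `A ⊕ A` with multiplication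
`(a₁,a₂)(a₃,a₄) = (a₁a₃ + α(a₄a₂*), a₁*a₄ + a₃a₂)`. -/
@[ext]
structure CD (A : Type*) (α : A) : Type _ where
  re : A
  im : A

namespace CD

variable {A : Type*} [NonAssocRing A] [StarRing A] {α : A}

instance : Zero (CD A α) := ⟨⟨0, 0⟩⟩
instance : Add (CD A α) := ⟨fun z w => ⟨z.re + w.re, z.im + w.im⟩⟩
instance : Neg (CD A α) := ⟨fun z => ⟨-z.re, -z.im⟩⟩
instance : One (CD A α) := ⟨⟨1, 0⟩⟩
instance : Mul (CD A α) :=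
  ⟨fun z w => ⟨z.re * w.re + α * (w.im * star z.im), star z.re * w.im + w.re * z.im⟩⟩
instance : Star (CD A α) := ⟨fun z => ⟨star z.re, -z.im⟩⟩

@[simp] theorem zero_re : (0 : CD A α).re = 0 := rfl
@[simp] theorem zero_im : (0 : CD A α).im = 0 := rfl
@[simp] theorem one_re : (1 : CD A α).re = 1 := rfl
@[simp] theorem one_im : (1 : CD A α).im = 0 := rfl
@[simp] theorem add_re (z w : CD A α) : (z + w).re = z.re + w.re := rfl
@[simp] theorem add_im (z w : CD A α) : (z + w).im = z.im + w.im := rfl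
@[simp] theorem neg_re (z : CD A α) : (-z).re = -z.re := rfl
@[simp] theorem neg_im (z : CD A α) : (-z).im = -z.im := rfl
@[simp] theorem mul_re (z w : CD A α) :
    (z * w).re = z.re * w.re + α * (w.im * star z.im) := rfl
@[simp] theorem mul_im (z w : CD A α) :
    (z * w).im = star z.re * w.im + w.re * z.im := rfl
@[simp] theorem star_re (z : CD A α) : (star z).re = star z.re := rfl
@[simp] theorem star_im (z : CD A α) : (star z).im = -z.im := rfl
@[simp] theorem mk_re (x y : A) : (⟨x, y⟩ : CD A α).re = x := rfl
@[simp] theorem mk_im (x y : A) : (⟨x, y⟩ : CD A α).im = y := rfl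

instance : NonAssocRing (CD A α) where
  add_assoc a b c := by ext <;> simp [add_assoc]
  zero_add a := by ext <;> simp
  add_zero a := by ext <;> simp
  add_comm a b := by ext <;> simp [add_comm]
  neg_add_cancel a := by ext <;> simp
  nsmul := nsmulRec
  zsmul := zsmulRec
  left_distrib a b c := by ext <;> simp [mul_add, add_mul] <;> abel
  right_distrib a b c := by ext <;> simp [mul_add, add_mul, star_add] <;> abel
  zero_mul a := by ext <;> simp
  mul_zero a := by ext <;> simp
  one_mul a := by ext <;> simp
  mul_one a := by ext <;> simp

instance {A : Type*} {α : A} [Finite A] : Finite (CD A α) :=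
  Finite.of_injective (fun z : CD A α => (z.re, z.im))
    (fun z w h => by cases z; cases w; simpa using h)

/-- If `α` commutes with every element and `star α = α`, then `(a,b) ↦ (a*, -b)`
makes `(A, α)` a star ring. -/
def starRing (h : ∀ t : A, α * t = t * α) (hs : star α = α) : StarRing (CD A α) where
  star := star
  star_involutive z := by ext <;> simp
  star_mul z w := by
    ext <;>
      simp [StarMul.star_mul, star_star, StarAddMonoid.star_add, star_neg, hs, h, mul_neg, neg_mul,
        neg_add] <;>
      abel
  star_add z w := by ext <;> simp [StarAddMonoid.star_add, neg_add] <;> abel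

/-- An element of the form `(x, 0)` with `x` commuting with everything and `star x = x`
commutes with every element of `(A, α)`. -/
theorem mk_zero_comm {x : A} (hx : ∀ t : A, x * t = t * x) (hsx : star x = x) (z : CD A α) :
    (⟨x, 0⟩ : CD A α) * z = z * ⟨x, 0⟩ := by
  ext <;> simp [hsx, hx]

end CD

open Quaternion in
theorem stmt13 {K : Type*} [CommRing K] (a b : K) :
    EssentialIn
        {q : ℍ[K, a, b] | 2 * q.re = 0 ∧ 2 * q.imI = 0 ∧ 2 * q.imJ = 0 ∧ 2 * q.imK = 0}
        {q : ℍ[K, a, b] | 2 * q.imI = 0 ∧ 2 * q.imJ = 0 ∧ 2 * q.imK = 0} ↔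
      ∀ x : K, x ≠ 0 → ∃ y : K, y * x ≠ 0 ∧ 2 * (y * x) = 0 := by
  constructor
  · intro hE x hx
    obtain ⟨d, hdB, hdq, hdI⟩ := hE (⟨x, 0, 0, 0⟩ : ℍ[K, a, b]) (by simp) (by
      intro h
      apply hx
      simpa using congrArg QuaternionAlgebra.re h)
    obtain ⟨hB1, hB2, hB3⟩ := hdB
    obtain ⟨hI0, hI1, hI2, hI3⟩ := hdI
    have hre : (d * (⟨x, 0, 0, 0⟩ : ℍ[K, a, b])).re = d.re * x := by
      simp [QuaternionAlgebra.re_mul]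
    have hi : (d * (⟨x, 0, 0, 0⟩ : ℍ[K, a, b])).imI = d.imI * x := by
      simp [QuaternionAlgebra.imI_mul]
    have hj : (d * (⟨x, 0, 0, 0⟩ : ℍ[K, a, b])).imJ = d.imJ * x := by
      simp [QuaternionAlgebra.imJ_mul]
    have hk : (d * (⟨x, 0, 0, 0⟩ : ℍ[K, a, b])).imK = d.imK * x := by
      simp [QuaternionAlgebra.imK_mul]
    by_cases h0 : d.re * x ≠ 0
    · exact ⟨d.re, h0, by rw [← hre]; exact hI0⟩
    push_neg at h0
    by_cases h1 : d.imI * x ≠ 0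
    · exact ⟨d.imI, h1, by rw [← hi]; exact hI1⟩
    push_neg at h1
    by_cases h2 : d.imJ * x ≠ 0
    · exact ⟨d.imJ, h2, by rw [← hj]; exact hI2⟩
    push_neg at h2
    by_cases h3 : d.imK * x ≠ 0
    · exact ⟨d.imK, h3, by rw [← hk]; exact hI3⟩
    push_neg at h3
    exfalso
    apply hdq
    ext <;> simp [hre, hi, hj, hk, h0, h1, h2, h3]
  · intro hN q hqB hq
    obtain ⟨hq1, hq2, hq3⟩ := hqB
    by_cases h0 : q.re = 0
    · refine ⟨1, by simp, by simpa using hq, by simpa [h0] using ⟨hq1, hq2, hq3⟩⟩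
    · obtain ⟨y, hy, hy2⟩ := hN q.re h0
      refine ⟨⟨y, 0, 0, 0⟩, by simp, ?_, ?_⟩
      · intro h
        apply hy
        have := congrArg QuaternionAlgebra.re h
        simpa [QuaternionAlgebra.re_mul] using this
      · have e1 : ((⟨y, 0, 0, 0⟩ : ℍ[K, a, b]) * q).re = y * q.re := by
          simp [QuaternionAlgebra.re_mul]
        have e2 : ((⟨y, 0, 0, 0⟩ : ℍ[K, a, b]) * q).imI = y * q.imI := by
          simp [QuaternionAlgebra.imI_mul]
        have e3 : ((⟨y, 0, 0, 0⟩ : ℍ[K, a, b]) * q).imJ = y * q.imJ := by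
          simp [QuaternionAlgebra.imJ_mul]
        have e4 : ((⟨y, 0, 0, 0⟩ : ℍ[K, a, b]) * q).imK = y * q.imK := by
          simp [QuaternionAlgebra.imK_mul]
        refine ⟨by rw [e1]; exact hy2, ?_, ?_, ?_⟩
        · rw [e2]; calc 2 * (y * q.imI) = y * (2 * q.imI) := by ring
            _ = 0 := by rw [hq1, mul_zero]
        · rw [e3]; calc 2 * (y * q.imJ) = y * (2 * q.imJ) := by ring
            _ = 0 := by rw [hq2, mul_zero]
        · rw [e4]; calc 2 * (y * q.imK) = y * (2 * q.imK) := by ring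
            _ = 0 := by rw [hq3, mul_zero]
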